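/- Let n ≥ 2 and let E_1, …, E_n be Banach spaces such that E_2', …, E_n' have the Littlewood–Orlicz property. Then every continuous n-linear form A : E_1 × ⋯ × E_n → 𝕂 is absolutely (1;1,2,…,2)-summing. -/

import Mathlib

open scoped BigOperators NNReal ENNReal

/-- The weak `ℓ_r` norm of a finite family `(x_j)` in a normed space:
`sup_{‖φ‖ ≤ 1} (∑_j ‖φ(x_j)‖^r)^(1/r)`. -/
noncomputable def weakNorm (𝕜 : Type*) [RCLike 𝕜] {E : Type*} [NormedAddCommGroup E]
    [NormedSpace 𝕜 E] (r : ℝ) {m : ℕ} (x : Fin m → E) : ℝ :=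
  ⨆ φ : {φ : E →L[𝕜] 𝕜 // ‖φ‖ ≤ 1}, (∑ j, ‖φ.1 (x j)‖ ^ r) ^ (1 / r)

/-- A Banach space `X` has the Littlewood–Orlicz property: `ℓ₁ʷ(X)` embeds continuously into
`ℓ₂ ⊗_π X = ℓ₂⟨X⟩`, expressed through the Bu–Diestel duality characterization:
`∑_j |ψ_j(x_j)| ≤ C ‖(x_j)‖_{ℓ₁ʷ(X)} ‖(ψ_j)‖_{ℓ₂ʷ(X')}` for all finite families. -/
def LittlewoodOrlicz (𝕜 : Type*) [RCLike 𝕜] (X : Type*) [NormedAddCommGroup X]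
    [NormedSpace 𝕜 X] : Prop :=
  ∃ C > 0, ∀ (m : ℕ) (x : Fin m → X) (ψ : Fin m → (X →L[𝕜] 𝕜)),
    ∑ j, ‖ψ j (x j)‖ ≤ C * weakNorm 𝕜 1 x * weakNorm 𝕜 2 ψ

/-- The Rademacher norm of a finite family `(x_j)_{j=1}^m` in a normed space:
`(2^{-m} ∑_{ε ∈ {-1,1}^m} ‖∑_j ε_j x_j‖²)^{1/2}`. -/
noncomputable def radNorm {E : Type*} [NormedAddCommGroup E] {m : ℕ} (x : Fin m → E) : ℝ :=
  ((∑ ε : Fin m → Bool, ‖∑ j, (if ε j then x j else -x j)‖ ^ 2) / (2 : ℝ) ^ m) ^ ((1 : ℝ) / 2)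

/-- A continuous multilinear map is absolutely `(p; p₁, …, pₙ)`-summing. -/
def IsAbsSumming {𝕜 : Type*} [RCLike 𝕜] {n : ℕ} {E : Fin n → Type*}
    [∀ i, NormedAddCommGroup (E i)] [∀ i, NormedSpace 𝕜 (E i)]
    {F : Type*} [NormedAddCommGroup F] [NormedSpace 𝕜 F]
    (p : ℝ) (ps : Fin n → ℝ) (A : ContinuousMultilinearMap 𝕜 E F) : Prop :=
  ∃ C > 0, ∀ (m : ℕ) (x : ∀ i, Fin m → E i),
    (∑ j, ‖A (fun i => x i j)‖ ^ p) ^ (1 / p) ≤ C * ∏ i, weakNorm 𝕜 (ps i) (x i)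

section Aux

universe u

variable {𝕜 : Type*} [RCLike 𝕜]

theorem weakNorm_nonneg {E : Type*} [NormedAddCommGroup E] [NormedSpace 𝕜 E]
    (r : ℝ) {m : ℕ} (x : Fin m → E) : 0 ≤ weakNorm 𝕜 r x :=
  Real.iSup_nonneg fun _ => Real.rpow_nonneg
    (Finset.sum_nonneg fun _ _ => Real.rpow_nonneg (norm_nonneg _) _) _

theorem weakNorm_bddAbove {E : Type*} [NormedAddCommGroup E] [NormedSpace 𝕜 E]
    {r : ℝ} (hr : 0 ≤ r) {m : ℕ} (x : Fin m → E) :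
    BddAbove (Set.range fun φ : {φ : E →L[𝕜] 𝕜 // ‖φ‖ ≤ 1} =>
      (∑ j, ‖φ.1 (x j)‖ ^ r) ^ (1 / r)) := by
  refine ⟨(∑ j, ‖x j‖ ^ r) ^ (1 / r), ?_⟩
  rintro _ ⟨φ, rfl⟩
  refine Real.rpow_le_rpow (Finset.sum_nonneg fun _ _ => Real.rpow_nonneg (norm_nonneg _) _)
    (Finset.sum_le_sum fun j _ => Real.rpow_le_rpow (norm_nonneg _) ?_ hr)
    (one_div_nonneg.2 hr)
  exact (φ.1.le_opNorm _).trans (mul_le_of_le_one_left (norm_nonneg _) φ.2)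

theorem le_weakNorm {E : Type*} [NormedAddCommGroup E] [NormedSpace 𝕜 E]
    {r : ℝ} (hr : 0 ≤ r) {m : ℕ} (x : Fin m → E) (φ : E →L[𝕜] 𝕜) (hφ : ‖φ‖ ≤ 1) :
    (∑ j, ‖φ (x j)‖ ^ r) ^ (1 / r) ≤ weakNorm 𝕜 r x :=
  le_ciSup (weakNorm_bddAbove hr x) (⟨φ, hφ⟩ : {φ : E →L[𝕜] 𝕜 // ‖φ‖ ≤ 1})

theorem weakNorm_le {E : Type*} [NormedAddCommGroup E] [NormedSpace 𝕜 E]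
    {r : ℝ} {m : ℕ} {x : Fin m → E} {c : ℝ}
    (h : ∀ φ : E →L[𝕜] 𝕜, ‖φ‖ ≤ 1 → (∑ j, ‖φ (x j)‖ ^ r) ^ (1 / r) ≤ c) :
    weakNorm 𝕜 r x ≤ c := by
  haveI : Nonempty {φ : E →L[𝕜] 𝕜 // ‖φ‖ ≤ 1} := ⟨⟨0, by simp⟩⟩
  exact ciSup_le fun φ => h φ.1 φ.2

/-- Summing a functional over a family is bounded by the weak ℓ¹ norm. -/
theorem sum_norm_apply_le {E : Type*} [NormedAddCommGroup E] [NormedSpace 𝕜 E]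
    (T : E →L[𝕜] 𝕜) {m : ℕ} (z : Fin m → E) :
    ∑ j, ‖T (z j)‖ ≤ ‖T‖ * weakNorm 𝕜 1 z := by
  rcases eq_or_lt_of_le (norm_nonneg T) with hT | hT
  · have : T = 0 := by rwa [eq_comm, norm_eq_zero] at hT
    simp [this]
  · set φ : E →L[𝕜] 𝕜 := (‖T‖⁻¹ : ℝ) • T with hφdef
    have hφ : ‖φ‖ ≤ 1 := by
      rw [hφdef]
      calc ‖(‖T‖⁻¹ : ℝ) • T‖ ≤ ‖(‖T‖⁻¹ : ℝ)‖ * ‖T‖ := norm_smul_le (‖T‖⁻¹ : ℝ) T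
        _ = 1 := by
          rw [Real.norm_eq_abs, abs_of_nonneg (inv_nonneg.2 (norm_nonneg T)),
            inv_mul_cancel₀ hT.ne']
    have hkey : ∀ j, ‖T (z j)‖ = ‖T‖ * ‖φ (z j)‖ := by
      intro j
      rw [hφdef]
      simp only [ContinuousLinearMap.coe_smul', Pi.smul_apply, norm_smul, Real.norm_eq_abs,
        abs_of_nonneg (inv_nonneg.2 (norm_nonneg T))]
      field_simp
    calc ∑ j, ‖T (z j)‖ = ‖T‖ * ∑ j, ‖φ (z j)‖ := by
          rw [Finset.mul_sum]; exact Finset.sum_congr rfl fun j _ => hkey j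
      _ ≤ ‖T‖ * weakNorm 𝕜 1 z := by
          refine mul_le_mul_of_nonneg_left ?_ (norm_nonneg T)
          have := le_weakNorm (𝕜 := 𝕜) zero_le_one z φ hφ
          simpa [Real.rpow_one] using this

/-- The weak norm after composing with a continuous linear map. -/
theorem weakNorm_comp_le {E F : Type*} [NormedAddCommGroup E] [NormedSpace 𝕜 E]
    [NormedAddCommGroup F] [NormedSpace 𝕜 F] (T : E →L[𝕜] F)
    {r : ℝ} (hr : 0 < r) {m : ℕ} (x : Fin m → E) :
    weakNorm 𝕜 r (fun j => T (x j)) ≤ ‖T‖ * weakNorm 𝕜 r x := by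
  refine weakNorm_le fun φ hφ => ?_
  rcases eq_or_lt_of_le (norm_nonneg T) with hT | hT
  · have hT0 : T = 0 := by rwa [eq_comm, norm_eq_zero] at hT
    have : ∀ j : Fin m, ‖φ (T (x j))‖ ^ r = 0 := by
      intro j; rw [hT0]; simp [Real.zero_rpow hr.ne']
    rw [Finset.sum_congr rfl fun j _ => this j]
    simp only [Finset.sum_const, smul_zero]
    rw [Real.zero_rpow (by positivity : (1 : ℝ) / r ≠ 0), ← hT]
    have := mul_nonneg (le_refl (0:ℝ)) (weakNorm_nonneg (𝕜 := 𝕜) r x)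
    simpa using this
  · set ψ : E →L[𝕜] 𝕜 := (‖T‖⁻¹ : ℝ) • (φ.comp T) with hψdef
    have hψ : ‖ψ‖ ≤ 1 := by
      rw [hψdef]
      refine (norm_smul_le (‖T‖⁻¹ : ℝ) (φ.comp T)).trans ?_
      rw [Real.norm_eq_abs, abs_of_nonneg (inv_nonneg.2 (norm_nonneg T))]
      calc ‖T‖⁻¹ * ‖φ.comp T‖ ≤ ‖T‖⁻¹ * (‖φ‖ * ‖T‖) :=
            mul_le_mul_of_nonneg_left (φ.opNorm_comp_le T) (inv_nonneg.2 (norm_nonneg T))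
        _ ≤ ‖T‖⁻¹ * (1 * ‖T‖) := by
            refine mul_le_mul_of_nonneg_left ?_ (inv_nonneg.2 (norm_nonneg T))
            exact mul_le_mul_of_nonneg_right hφ (norm_nonneg T)
        _ = 1 := by rw [one_mul, inv_mul_cancel₀ hT.ne']
    have hkey : ∀ j, ‖φ (T (x j))‖ = ‖T‖ * ‖ψ (x j)‖ := by
      intro j
      rw [hψdef]
      simp only [ContinuousLinearMap.coe_smul', Pi.smul_apply, ContinuousLinearMap.coe_comp',
        Function.comp_apply, norm_smul, Real.norm_eq_abs,
        abs_of_nonneg (inv_nonneg.2 (norm_nonneg T))]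
      field_simp
    calc (∑ j, ‖φ (T (x j))‖ ^ r) ^ (1 / r)
        = (∑ j, ‖T‖ ^ r * ‖ψ (x j)‖ ^ r) ^ (1 / r) := by
          congr 1
          refine Finset.sum_congr rfl fun j _ => ?_
          rw [hkey j, Real.mul_rpow (norm_nonneg T) (norm_nonneg _)]
      _ = (‖T‖ ^ r * ∑ j, ‖ψ (x j)‖ ^ r) ^ (1 / r) := by rw [Finset.mul_sum]
      _ = ‖T‖ * (∑ j, ‖ψ (x j)‖ ^ r) ^ (1 / r) := by
          rw [Real.mul_rpow (Real.rpow_nonneg (norm_nonneg T) r)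
            (Finset.sum_nonneg fun _ _ => Real.rpow_nonneg (norm_nonneg _) _),
            ← Real.rpow_mul (norm_nonneg T), mul_one_div, div_self hr.ne', Real.rpow_one]
      _ ≤ ‖T‖ * weakNorm 𝕜 r x :=
          mul_le_mul_of_nonneg_left (le_weakNorm hr.le x ψ hψ) (norm_nonneg T)

/-- The core inductive estimate: for any finite family of Banach spaces whose duals (except
possibly the first) have the Littlewood–Orlicz property, every continuous multilinear form
satisfies the `(1;1,2,…,2)`-summing inequality with a constant uniform in the form. -/
theorem lo_key {𝕜 : Type*} [RCLike 𝕜] :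
    ∀ (k : ℕ) (E : Fin (k + 1) → Type u) [∀ i, NormedAddCommGroup (E i)]
      [∀ i, NormedSpace 𝕜 (E i)],
      (∀ i : Fin (k + 1), 1 ≤ i.val → LittlewoodOrlicz 𝕜 (E i →L[𝕜] 𝕜)) →
      ∃ C > 0, ∀ (A : ContinuousMultilinearMap 𝕜 E 𝕜) (m : ℕ) (x : ∀ i, Fin m → E i),
        ∑ j, ‖A (fun i => x i j)‖ ≤
          C * ‖A‖ * ∏ i, weakNorm 𝕜 (if i.val = 0 then 1 else 2) (x i) := by
  intro k
  induction k with
  | zero =>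
    intro E _ _ _
    refine ⟨1, one_pos, fun A m x => ?_⟩
    set e : ∀ i : Fin 0, E i.succ := fun i => i.elim0 with he
    let Tl : E 0 →ₗ[𝕜] 𝕜 :=
      { toFun := fun y => A (Fin.cons y e)
        map_add' := fun y z => A.toMultilinearMap.cons_add e y z
        map_smul' := fun c y => A.toMultilinearMap.cons_smul e c y }
    have hTl : ∀ y, ‖Tl y‖ ≤ ‖A‖ * ‖y‖ := by
      intro y
      calc ‖A (Fin.cons y e)‖ ≤ ‖A‖ * ∏ i, ‖Fin.cons y e i‖ := A.le_opNorm _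
        _ = ‖A‖ * ‖y‖ := by rw [Fin.prod_univ_one]; rfl
    set T : E 0 →L[𝕜] 𝕜 := LinearMap.mkContinuous Tl ‖A‖ hTl with hTdef
    have hT : ‖T‖ ≤ ‖A‖ := LinearMap.mkContinuous_norm_le Tl (norm_nonneg A) hTl
    have happ : ∀ j, A (fun i => x i j) = T (x 0 j) := by
      intro j
      have : (fun i => x i j) = Fin.cons (x 0 j) e := by
        funext i
        have hi : i = 0 := Fin.ext (by have := i.isLt; omega)
        subst hi
        rfl
      rw [this]
      rfl
    calc ∑ j, ‖A (fun i => x i j)‖ = ∑ j, ‖T (x 0 j)‖ := by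
          exact Finset.sum_congr rfl fun j _ => by rw [happ j]
      _ ≤ ‖T‖ * weakNorm 𝕜 1 (x 0) := sum_norm_apply_le T (x 0)
      _ ≤ ‖A‖ * weakNorm 𝕜 1 (x 0) :=
          mul_le_mul_of_nonneg_right hT (weakNorm_nonneg 1 (x 0))
      _ = 1 * ‖A‖ * ∏ i, weakNorm 𝕜 (if i.val = 0 then 1 else 2) (x i) := by
          rw [Fin.prod_univ_one, one_mul]
          norm_num
  | succ k ih =>
    intro E _ _ hLO
    obtain ⟨C₁, hC₁, H₁⟩ := ih (fun i => E i.castSucc) fun i hi =>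
      hLO i.castSucc (by simpa using hi)
    obtain ⟨C₂, hC₂, H₂⟩ := hLO (Fin.last (k + 1)) (by simp)
    refine ⟨C₂ * C₁, by positivity, fun A m x => ?_⟩
    set φv : Fin m → (E (Fin.last (k + 1)) →L[𝕜] 𝕜) :=
      fun j => A.curryRight (fun i => x i.castSucc j) with hφv
    set ψv : Fin m → ((E (Fin.last (k + 1)) →L[𝕜] 𝕜) →L[𝕜] 𝕜) :=
      fun j => NormedSpace.inclusionInDoubleDual 𝕜 (E (Fin.last (k + 1)))
        (x (Fin.last (k + 1)) j) with hψv
    have happ : ∀ j, A (fun i => x i j) = ψv j (φv j) := by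
      intro j
      have h1 : ψv j (φv j) = φv j (x (Fin.last (k + 1)) j) := rfl
      have h2 : φv j (x (Fin.last (k + 1)) j) =
          A (Fin.snoc (fun i => x i.castSucc j) (x (Fin.last (k + 1)) j)) :=
        A.curryRight_apply _ _
      have h3 : Fin.snoc (fun i : Fin (k + 1) => x i.castSucc j)
          (x (Fin.last (k + 1)) j) = fun i => x i j := by
        have := Fin.snoc_init_self (fun i => x i j)
        exact this
      rw [h1, h2, h3]
    have hψ : weakNorm 𝕜 2 ψv ≤ weakNorm 𝕜 2 (x (Fin.last (k + 1))) := by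
      have h := weakNorm_comp_le (𝕜 := 𝕜) (E := E (Fin.last (k + 1)))
        (F := StrongDual 𝕜 (StrongDual 𝕜 (E (Fin.last (k + 1)))))
        (NormedSpace.inclusionInDoubleDual 𝕜 (E (Fin.last (k + 1))))
        (by norm_num : (0:ℝ) < 2) (x (Fin.last (k + 1)))
      have h3 := NormedSpace.inclusionInDoubleDual_norm_le 𝕜 (E (Fin.last (k + 1)))
      exact le_trans (le_of_eq rfl) (h.trans (mul_le_of_le_one_left
        (weakNorm_nonneg (𝕜 := 𝕜) 2 (x (Fin.last (k + 1)))) h3))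
    set P : ℝ := ∏ i : Fin (k + 1),
      weakNorm 𝕜 (if i.val = 0 then 1 else 2) (x i.castSucc) with hP
    have hPnn : 0 ≤ P := Finset.prod_nonneg fun i _ => weakNorm_nonneg _ _
    have hφ : weakNorm 𝕜 1 φv ≤ C₁ * ‖A‖ * P := by
      refine weakNorm_le fun Φ hΦ => ?_
      set B : ContinuousMultilinearMap 𝕜 (fun i : Fin (k + 1) => E i.castSucc) 𝕜 :=
        Φ.compContinuousMultilinearMap A.curryRight with hB
      have hBnorm : ‖B‖ ≤ ‖A‖ := by
        calc ‖B‖ ≤ ‖Φ‖ * ‖A.curryRight‖ := Φ.norm_compContinuousMultilinearMap_le _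
          _ ≤ 1 * ‖A‖ := by
            rw [A.curryRight_norm]
            exact mul_le_mul_of_nonneg_right hΦ (norm_nonneg A)
          _ = ‖A‖ := one_mul _
      have hΦφ : ∀ j, Φ (φv j) = B (fun i => x i.castSucc j) := fun j => rfl
      have : ∑ j, ‖Φ (φv j)‖ ≤ C₁ * ‖A‖ * P := by
        calc ∑ j, ‖Φ (φv j)‖ = ∑ j, ‖B (fun i => x i.castSucc j)‖ :=
              Finset.sum_congr rfl fun j _ => by rw [hΦφ j]
          _ ≤ C₁ * ‖B‖ * P := H₁ B m (fun i => x i.castSucc)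
          _ ≤ C₁ * ‖A‖ * P := by
              refine mul_le_mul_of_nonneg_right ?_ hPnn
              exact mul_le_mul_of_nonneg_left hBnorm hC₁.le
      simpa [Real.rpow_one] using this
    calc ∑ j, ‖A (fun i => x i j)‖ = ∑ j, ‖ψv j (φv j)‖ :=
          Finset.sum_congr rfl fun j _ => by rw [happ j]
      _ ≤ C₂ * weakNorm 𝕜 1 φv * weakNorm 𝕜 2 ψv := H₂ m φv ψv
      _ ≤ C₂ * (C₁ * ‖A‖ * P) * weakNorm 𝕜 2 (x (Fin.last (k + 1))) := by
          refine mul_le_mul (mul_le_mul_of_nonneg_left hφ hC₂.le) hψ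
            (weakNorm_nonneg _ _) ?_
          positivity
      _ = C₂ * C₁ * ‖A‖ *
          ∏ i, weakNorm 𝕜 (if i.val = 0 then 1 else 2) (x i) := by
          rw [Fin.prod_univ_castSucc, hP]
          simp only [Fin.coe_castSucc, Fin.val_last]
          rw [if_neg (by omega : ¬(k + 1 = 0))]
          ring

end Aux


/-- If `E₂', …, E_n'` have the Littlewood–Orlicz property, then every continuous `n`-linear
form on `E₁ × ⋯ × E_n` is absolutely `(1; 1, 2, …, 2)`-summing. -/
theorem littlewood_orlicz_one_two {𝕜 : Type*} [RCLike 𝕜] {n : ℕ} (hn : 2 ≤ n)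
    (E : Fin n → Type*) [∀ i, NormedAddCommGroup (E i)] [∀ i, NormedSpace 𝕜 (E i)]
    [∀ i, CompleteSpace (E i)]
    (hLO : ∀ i : Fin n, 1 ≤ i.val → LittlewoodOrlicz 𝕜 (E i →L[𝕜] 𝕜))
    (A : ContinuousMultilinearMap 𝕜 E 𝕜) :
    IsAbsSumming 1 (fun i => if i.val = 0 then 1 else 2) A := by
  obtain ⟨k, rfl⟩ : ∃ k, n = k + 1 := ⟨n - 1, by omega⟩
  obtain ⟨C, hC, H⟩ := lo_key (𝕜 := 𝕜) k E hLO
  refine ⟨C * (‖A‖ + 1), by positivity, fun m x => ?_⟩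
  have h0 : (∑ j, ‖A (fun i => x i j)‖ ^ (1:ℝ)) ^ (1 / (1:ℝ)) =
      ∑ j, ‖A (fun i => x i j)‖ := by
    simp [Real.rpow_one]
  rw [h0]
  calc ∑ j, ‖A (fun i => x i j)‖
      ≤ C * ‖A‖ * ∏ i, weakNorm 𝕜 (if i.val = 0 then 1 else 2) (x i) := H A m x
    _ ≤ C * (‖A‖ + 1) * ∏ i, weakNorm 𝕜 (if i.val = 0 then 1 else 2) (x i) := by
        refine mul_le_mul_of_nonneg_right ?_
          (Finset.prod_nonneg fun i _ => weakNorm_nonneg _ _)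
        nlinarith [hC]
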